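/- Lemma 3.5 (degenerate descent lemma): For all x, y ∈ H, f(y) ≤ f(x) + ⟪∇f(x), y − x⟫ + (β/(2ν)) · ⟪Q(y − x), y − x⟫. (Since the range of ∇f is contained in the range of Q, the linear term ⟪∇f(x), y − x⟫ equals the paper's ⟪Q(y − x), Q†∇f(x)⟫.) -/

import Mathlib

open RealInnerProductSpace

/-- Lemma 3.5: degenerate descent lemma. -/
theorem stmt_14
    {H : Type*} [NormedAddCommGroup H] [InnerProductSpace ℝ H] [CompleteSpace H]
    (Q : H →L[ℝ] H)
    (hQsym : ∀ x y : H, ⟪Q x, y⟫ = ⟪x, Q y⟫)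
    (hQpos : ∀ x : H, 0 ≤ ⟪Q x, x⟫)
    (ν : ℝ) (hν : 0 < ν)
    (hνQ : ∀ w ∈ (LinearMap.ker (Q : H →ₗ[ℝ] H))ᗮ, ν * ‖w‖ ≤ ‖Q w‖)
    (β : ℝ) (hβ : 0 ≤ β)
    (f : H → ℝ) (f' : H → H)
    (hf : ∀ x : H, HasGradientAt f (f' x) x)
    (hranf' : Set.range f' ⊆ Set.range Q)
    (hcoco : ∀ x y : H, ‖f' x - f' y‖ ^ 2 ≤ β * ⟪f' x - f' y, x - y⟫) :
    ∀ x y : H, f y ≤ f x + ⟪f' x, y - x⟫ + (β / (2 * ν)) * ⟪Q (y - x), y - x⟫ := by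
  -- Q-Cauchy-Schwarz
  have qcs : ∀ u w : H, ⟪Q u, w⟫ ^ 2 ≤ ⟪Q u, u⟫ * ⟪Q w, w⟫ := by
    intro u w
    have hsym : ⟪Q w, u⟫ = ⟪Q u, w⟫ := by
      rw [hQsym w u, real_inner_comm]
    have h : ∀ lam : ℝ, 0 ≤ ⟪Q w, w⟫ * (lam * lam) + (2 * ⟪Q u, w⟫) * lam + ⟪Q u, u⟫ := by
      intro lam
      have hpos := hQpos (u + lam • w)
      have hexp : ⟪Q (u + lam • w), u + lam • w⟫
          = ⟪Q w, w⟫ * (lam * lam) + (2 * ⟪Q u, w⟫) * lam + ⟪Q u, u⟫ := by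
        simp only [map_add, map_smul, inner_add_left, inner_add_right, inner_smul_left,
          inner_smul_right, ContinuousLinearMap.coe_smul', Pi.smul_apply, RCLike.star_def,
          starRingEnd_apply, star_trivial]
        rw [hsym]; ring
      rw [hexp] at hpos
      exact hpos
    have hd := discrim_le_zero h
    rw [discrim] at hd
    nlinarith [hd]
  -- key bound for elements of range Q
  have key : ∀ d w : H, d ∈ Set.range Q → ⟪d, w⟫ ≤ ‖d‖ * Real.sqrt (⟪Q w, w⟫ / ν) := by
    intro d w hd
    obtain ⟨p, hp⟩ := hd
    haveI : CompleteSpace (LinearMap.ker (Q : H →ₗ[ℝ] H)) := (ContinuousLinearMap.isClosed_ker Q).completeSpace_coe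
    obtain ⟨p₀, hp₀, p₁, hp₁, hpsum⟩ := (LinearMap.ker (Q : H →ₗ[ℝ] H)).exists_add_mem_mem_orthogonal p
    have hQp₁ : Q p₁ = d := by
      have : Q p = Q p₀ + Q p₁ := by rw [hpsum, map_add]
      rw [show Q p₀ = 0 from LinearMap.mem_ker.mp hp₀] at this
      rw [← hp, this, zero_add]
    -- bound on the Q-energy of p₁
    have h1 : ⟪d, p₁⟫ ≤ ‖d‖ ^ 2 / ν := by
      have hn : ν * ‖p₁‖ ≤ ‖Q p₁‖ := hνQ p₁ hp₁
      have hcs : ⟪Q p₁, p₁⟫ ≤ ‖Q p₁‖ * ‖p₁‖ := real_inner_le_norm _ _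
      rw [hQp₁] at hn hcs
      rw [div_eq_inv_mul, le_inv_mul_iff₀ hν]
      nlinarith [mul_le_mul_of_nonneg_left hcs hν.le,
        mul_le_mul_of_nonneg_left hn (norm_nonneg d), norm_nonneg p₁, norm_nonneg d]
    have h2 : ⟪d, w⟫ ^ 2 ≤ (‖d‖ ^ 2 / ν) * ⟪Q w, w⟫ := by
      have hq := qcs p₁ w
      rw [hQp₁] at hq
      have hq1 : (0:ℝ) ≤ ⟪Q w, w⟫ := hQpos w
      have := mul_le_mul_of_nonneg_right h1 hq1
      linarith [hq, this]
    have h3 : ⟪d, w⟫ ≤ Real.sqrt ((‖d‖ ^ 2 / ν) * ⟪Q w, w⟫) := by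
      calc ⟪d, w⟫ ≤ |⟪d, w⟫| := le_abs_self _
        _ = Real.sqrt (⟪d, w⟫ ^ 2) := by rw [Real.sqrt_sq_eq_abs]
        _ ≤ _ := Real.sqrt_le_sqrt h2
    calc ⟪d, w⟫ ≤ Real.sqrt ((‖d‖ ^ 2 / ν) * ⟪Q w, w⟫) := h3
      _ = ‖d‖ * Real.sqrt (⟪Q w, w⟫ / ν) := by
          rw [show (‖d‖ ^ 2 / ν) * ⟪Q w, w⟫ = ‖d‖ ^ 2 * (⟪Q w, w⟫ / ν) by ring,
            Real.sqrt_mul (by positivity), Real.sqrt_sq (norm_nonneg d)]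
  intro x y
  set c : ℝ := ⟪Q (y - x), y - x⟫ with hc_def
  have hc : 0 ≤ c := hQpos _
  set γ : ℝ → H := fun t => x + t • (y - x) with hγ_def
  -- derivative along the line
  have hderiv : ∀ t : ℝ, HasDerivAt (fun s => f (γ s)) ⟪f' (γ t), y - x⟫ t := by
    intro t
    have hγ : HasDerivAt γ (y - x) t := by
      have := ((hasDerivAt_id t).smul_const (y - x)).const_add x
      simpa [hγ_def] using this
    have := ((hf (γ t)).hasFDerivAt).comp_hasDerivAt t hγ
    simp [InnerProductSpace.toDual_apply_apply, Function.comp] at this; exact this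
  -- pointwise bound on the derivative increment
  have hptwise : ∀ t : ℝ, 0 ≤ t → ⟪f' (γ t) - f' x, y - x⟫ ≤ β * c / ν * t := by
    intro t ht
    set d : H := f' (γ t) - f' x with hd_def
    have hdran : d ∈ Set.range Q := by
      obtain ⟨a, ha⟩ := hranf' ⟨γ t, rfl⟩
      obtain ⟨b, hb⟩ := hranf' ⟨x, rfl⟩
      exact ⟨a - b, by rw [map_sub, ha, hb]⟩
    have hkey := key d (y - x) hdran
    by_cases hD : ⟪d, y - x⟫ ≤ 0
    · exact hD.trans (by positivity)
    push_neg at hD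
    have hco := hcoco (γ t) x
    have hγx : γ t - x = t • (y - x) := by simp [hγ_def]
    rw [hγx, real_inner_smul_right] at hco
    have hco' : ‖d‖ ^ 2 ≤ β * t * ⟪d, y - x⟫ := by
      rw [hd_def]; nlinarith [hco]
    have hdn : ‖d‖ ≤ β * t * Real.sqrt (c / ν) := by
      rcases eq_or_lt_of_le (norm_nonneg d) with h0 | h0
      · rw [← h0]; positivity
      · have : ‖d‖ ^ 2 ≤ β * t * (‖d‖ * Real.sqrt (c / ν)) := by
          calc ‖d‖ ^ 2 ≤ β * t * ⟪d, y - x⟫ := hco'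
            _ ≤ β * t * (‖d‖ * Real.sqrt (c / ν)) := by
                apply mul_le_mul_of_nonneg_left hkey (by positivity)
        nlinarith [this, h0]
    have hsq : Real.sqrt (c / ν) * Real.sqrt (c / ν) = c / ν :=
      Real.mul_self_sqrt (by positivity)
    calc ⟪d, y - x⟫ ≤ ‖d‖ * Real.sqrt (c / ν) := hkey
      _ ≤ (β * t * Real.sqrt (c / ν)) * Real.sqrt (c / ν) := by
          apply mul_le_mul_of_nonneg_right hdn (Real.sqrt_nonneg _)
      _ = β * t * (Real.sqrt (c / ν) * Real.sqrt (c / ν)) := by ring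
      _ = β * c / ν * t := by rw [hsq]; field_simp
  -- the auxiliary function
  set φ : ℝ → ℝ := fun t => f (γ t) - t * ⟪f' x, y - x⟫ - β * c / ν * t ^ 2 / 2 with hφ_def
  have hφderiv : ∀ t : ℝ, HasDerivAt φ (⟪f' (γ t), y - x⟫ - ⟪f' x, y - x⟫ - β * c / ν * t) t := by
    intro t
    have h1 := hderiv t
    have h2 : HasDerivAt (fun s : ℝ => s * ⟪f' x, y - x⟫) ⟪f' x, y - x⟫ t := by
      simpa using (hasDerivAt_id t).mul_const ⟪f' x, y - x⟫
    have h3 : HasDerivAt (fun s : ℝ => β * c / ν * s ^ 2 / 2) (β * c / ν * t) t := by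
      have := ((hasDerivAt_pow 2 t).const_mul (β * c / ν)).div_const 2
      simpa using this.congr_deriv (by ring)
    exact (h1.sub h2).sub h3
  have hanti : AntitoneOn φ (Set.Icc (0:ℝ) 1) := by
    apply antitoneOn_of_hasDerivWithinAt_nonpos (convex_Icc 0 1)
      (fun t _ => (hφderiv t).continuousAt.continuousWithinAt)
      (fun t _ => (hφderiv t).hasDerivWithinAt)
    intro t ht
    rw [interior_Icc] at ht
    have := hptwise t (le_of_lt ht.1)
    have h' : ⟪f' (γ t) - f' x, y - x⟫ = ⟪f' (γ t), y - x⟫ - ⟪f' x, y - x⟫ := by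
      rw [inner_sub_left]
    linarith [this, h'.symm.le]
  have h01 := hanti (Set.left_mem_Icc.mpr zero_le_one) (Set.right_mem_Icc.mpr zero_le_one)
    zero_le_one
  have hγ0 : γ 0 = x := by simp [hγ_def]
  have hγ1 : γ 1 = y := by simp [hγ_def]
  have hφ0 : φ 0 = f x := by simp [hφ_def, hγ0]
  have hφ1 : φ 1 = f y - ⟪f' x, y - x⟫ - β * c / ν / 2 := by simp [hφ_def, hγ1]
  rw [hφ0, hφ1] at h01
  have : β * c / ν / 2 = β / (2 * ν) * c := by
    rw [div_div, mul_comm ν 2, div_mul_eq_mul_div, mul_comm β c, mul_div_assoc]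
  linarith [h01, this.symm.le]
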